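/- (Weight-rounding lemma.) Let ℓ = k·g with k, g ≥ 1, let w : Fin ℓ → ℝ be nondecreasing weights with 0 < w i ≤ 1, and let w̃ be the rounded weights obtained by partitioning Fin ℓ into k consecutive groups of g items each and raising every weight in a group to the weight of the largest-indexed item of that group. Let F' be a maximum-cardinality subset of Fin ℓ that is packable into m unit-capacity bins under w̃, and let F be a maximum-cardinality subset of Fin ℓ that is packable into m unit-capacity bins under w. Then F' is packable into m unit-capacity bins under the original weights w, and |F'| ≥ |F| − g. -/

import Mathlib

/-- `T` is packable into `m` unit-capacity bins under weights `u`. -/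
def Packable {N : ℕ} (u : Fin N → ℝ) (m : ℕ) (T : Finset (Fin N)) : Prop :=
  ∃ p : Fin N → Fin m, ∀ j : Fin m, ∑ i ∈ T.filter (fun i => p i = j), u i ≤ 1

theorem weight_rounding
    (m k g : ℕ) (hm : 1 ≤ m) (hk : 1 ≤ k) (hg : 1 ≤ g)
    (w : Fin (k * g) → ℝ)
    (hw : ∀ i, 0 < w i ∧ w i ≤ 1) (hmono : Monotone w)
    (w' : Fin (k * g) → ℝ)
    (hw' : ∀ i : Fin (k * g),
      w' i = w ⟨i.val / g * g + (g - 1), by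
        have h1 : i.val < g * k := lt_of_lt_of_eq i.isLt (Nat.mul_comm k g)
        have h2 : i.val / g < k := Nat.div_lt_of_lt_mul h1
        have h3 : (i.val / g + 1) * g ≤ k * g := Nat.mul_le_mul_right g h2
        have h4 : i.val / g * g + 1 * g ≤ k * g := by rw [← Nat.add_mul]; exact h3
        omega⟩)
    (F' F : Finset (Fin (k * g)))
    (hF'pack : Packable w' m F')
    (hF'max : ∀ T : Finset (Fin (k * g)), Packable w' m T → T.card ≤ F'.card)
    (hFpack : Packable w m F)
    (hFmax : ∀ T : Finset (Fin (k * g)), Packable w m T → T.card ≤ F.card) :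
    Packable w m F' ∧ F.card ≤ F'.card + g := by
  classical
  have hwle : ∀ i, w i ≤ w' i := by
    intro i
    rw [hw' i]
    apply hmono
    rw [Fin.le_def]
    have h1 := Nat.div_add_mod' i.val g
    have h2 : i.val % g < g := Nat.mod_lt _ (by omega)
    simp only
    omega
  constructor
  · obtain ⟨p, hp⟩ := hF'pack
    refine ⟨p, fun j => le_trans (Finset.sum_le_sum fun i _ => hwle i) (hp j)⟩
  · -- shift F down by g
    set T : Finset (Fin (k * g)) := (F.filter (fun i => g ≤ i.val)).image
      (fun i => (⟨i.val - g, by have := i.isLt; omega⟩ : Fin (k * g))) with hT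
    have hTcard : F.card ≤ T.card + g := by
      have hinj : Set.InjOn (fun i : Fin (k * g) =>
          (⟨i.val - g, by have := i.isLt; omega⟩ : Fin (k * g)))
          (F.filter (fun i => g ≤ i.val)) := by
        intro a ha b hb hab
        simp only [Finset.coe_filter, Set.mem_setOf_eq] at ha hb
        have := congrArg Fin.val hab
        simp only at this
        exact Fin.ext (by omega)
      have h1 : T.card = (F.filter (fun i => g ≤ i.val)).card :=
        Finset.card_image_of_injOn hinj
      have h2 : (F.filter (fun i => ¬ g ≤ i.val)).card ≤ g := by
        have : (F.filter (fun i => ¬ g ≤ i.val)).card ≤ (Finset.range g).card := by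
          apply Finset.card_le_card_of_injOn (fun i => i.val)
          · intro a ha
            simp only [Finset.mem_coe, Finset.mem_filter] at ha
            simp only [Finset.mem_coe, Finset.mem_range]
            omega
          · intro a _ b _ hab
            exact Fin.ext hab
        simpa using this
      have h3 := Finset.card_filter_add_card_filter_not
        (s := F) (p := fun i => g ≤ i.val)
      omega
    have hTpack : Packable w' m T := by
      obtain ⟨p, hp⟩ := hFpack
      refine ⟨fun i => if h : i.val + g < k * g then p ⟨i.val + g, h⟩ else ⟨0, hm⟩, fun j => ?_⟩
      set p' : Fin (k * g) → Fin m :=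
        fun i => if h : i.val + g < k * g then p ⟨i.val + g, h⟩ else ⟨0, hm⟩ with hp'
      -- every i in T has i.val + g < k*g and ⟨i.val+g⟩ ∈ F
      have hmem : ∀ i ∈ T, ∃ h : i.val + g < k * g, (⟨i.val + g, h⟩ : Fin (k * g)) ∈ F := by
        intro i hi
        rw [hT, Finset.mem_image] at hi
        obtain ⟨a, ha, hae⟩ := hi
        simp only [Finset.mem_filter] at ha
        have halt := a.isLt
        have hv : i.val = a.val - g := by rw [← hae]
        have hlt : i.val + g < k * g := by omega
        refine ⟨hlt, ?_⟩
        have : (⟨i.val + g, hlt⟩ : Fin (k * g)) = a := by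
          apply Fin.ext
          show i.val + g = a.val
          omega
        rw [this]
        exact ha.1
      set e : Fin (k * g) → Fin (k * g) := fun i =>
        if h : i.val + g < k * g then ⟨i.val + g, h⟩ else i with he
      have key : ∑ i ∈ T.filter (fun i => p' i = j), w' i ≤
          ∑ i ∈ F.filter (fun i => p i = j), w i := by
        have step1 : ∑ i ∈ T.filter (fun i => p' i = j), w' i ≤
            ∑ i ∈ T.filter (fun i => p' i = j), w (e i) := by
          apply Finset.sum_le_sum
          intro i hi
          simp only [Finset.mem_filter] at hi
          obtain ⟨h, _⟩ := hmem i hi.1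
          rw [he]
          simp only [dif_pos h]
          rw [hw' i]
          apply hmono
          rw [Fin.le_def]
          simp only
          have := Nat.div_mul_le_self i.val g
          omega
        have step2 : ∑ i ∈ T.filter (fun i => p' i = j), w (e i) =
            ∑ x ∈ (T.filter (fun i => p' i = j)).image e, w x := by
          rw [Finset.sum_image]
          intro a ha b hb hab
          simp only [Finset.mem_coe, Finset.mem_filter] at ha hb
          obtain ⟨hA, _⟩ := hmem a ha.1
          obtain ⟨hB, _⟩ := hmem b hb.1
          rw [he] at hab
          simp only [dif_pos hA, dif_pos hB] at hab
          have := congrArg Fin.val hab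
          simp only at this
          exact Fin.ext (by omega)
        have step3 : (T.filter (fun i => p' i = j)).image e ⊆
            F.filter (fun i => p i = j) := by
          intro x hx
          rw [Finset.mem_image] at hx
          obtain ⟨a, ha, rfl⟩ := hx
          simp only [Finset.mem_filter] at ha
          obtain ⟨hA, hAF⟩ := hmem a ha.1
          rw [he]
          simp only [dif_pos hA]
          rw [Finset.mem_filter]
          refine ⟨hAF, ?_⟩
          have := ha.2
          rw [hp'] at this
          simpa [dif_pos hA] using this
        have step4 : ∑ x ∈ (T.filter (fun i => p' i = j)).image e, w x ≤
            ∑ x ∈ F.filter (fun i => p i = j), w x := by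
          apply Finset.sum_le_sum_of_subset_of_nonneg step3
          intro x _ _
          exact (hw x).1.le
        linarith
      exact le_trans key (hp j)
    have := hF'max T hTpack
    omega
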